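/- Let L : ℝ → M(n,n) solve L' + tr(L) L + (L^T L − L L^T) − (1/2) tr(L^T L) a a^+ = 0 along a curve a with a' = L a and L a a^+ = L. Define τ(t) = tr(L(t)) and δ(t) = tr(L(t)^T L(t)). Then τ' + τ² − (m/2) δ = 0 and δ' + τ δ = 0; consequently τ(t) = f'(t)/f(t) and δ(t) = δ(0)/f(t) where f(t) = (m δ(0)/4) t² + τ(0) t + 1 (as long as f > 0). -/

import Mathlib

open Matrix

attribute [local instance] Matrix.frobeniusNormedAddCommGroup Matrix.frobeniusNormedSpace

noncomputable section

/-- Moore-Penrose pseudoinverse of a full-rank `n × m` matrix. -/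
def aplus {n m : ℕ} (a : Matrix (Fin n) (Fin m) ℝ) : Matrix (Fin m) (Fin n) ℝ :=
  (aᵀ * a)⁻¹ * aᵀ

/-- Right-hand side of the geodesic equation `a_tt = geoRHS (a, a_t)` of the
metric `⟨u,v⟩_a = tr(u (aᵀa)⁻¹ vᵀ)√det(aᵀa)` on full-rank `n × m` matrices. -/
def geoRHS {n m : ℕ} (x v : Matrix (Fin n) (Fin m) ℝ) : Matrix (Fin n) (Fin m) ℝ :=
  v * (xᵀ * x)⁻¹ * vᵀ * x + v * (xᵀ * x)⁻¹ * xᵀ * v - x * (xᵀ * x)⁻¹ * vᵀ * v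
    + ((1 / 2) * Matrix.trace (v * (xᵀ * x)⁻¹ * vᵀ)) • x
    - (Matrix.trace (v * (xᵀ * x)⁻¹ * xᵀ)) • v

attribute [local instance] Matrix.frobeniusNormedRing Matrix.frobeniusNormedAlgebra

/-- Scalar ODE part: from `τ' = (m/2)δ - τ²` and `δ' = -τδ` we deduce the closed-form
relations `τ f = f'` and `δ f = δ₀` where `f` is the explicit quadratic polynomial. -/
lemma ode_part (m : ℕ) (tau dlt f : ℝ → ℝ)
    (htau' : ∀ s, HasDerivAt tau (((m : ℝ) / 2) * dlt s - tau s ^ 2) s)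
    (hdlt' : ∀ s, HasDerivAt dlt (-(tau s * dlt s)) s)
    (hf : ∀ s, f s = ((m : ℝ) * dlt 0 / 4) * s ^ 2 + tau 0 * s + 1)
    (t : ℝ) :
    tau t * f t = ((m : ℝ) * dlt 0 / 2) * t + tau 0 ∧ dlt t * f t = dlt 0 := by
  -- derivative of f
  have hfd : ∀ s, HasDerivAt f (((m : ℝ) * dlt 0 / 2) * s + tau 0) s := by
    intro s
    rw [funext hf]
    have h1 : HasDerivAt (fun x : ℝ => ((m : ℝ) * dlt 0 / 4) * x ^ 2 + tau 0 * x + 1)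
        (((m : ℝ) * dlt 0 / 4) * ((2 : ℕ) * s ^ 1) + tau 0 * 1) s :=
      (((hasDerivAt_pow 2 s).const_mul _).add ((hasDerivAt_id s).const_mul (tau 0))).add_const 1
    convert h1 using 1
    push_cast
    ring
  set u : ℝ → ℝ := fun s => tau s * f s - (((m : ℝ) * dlt 0 / 2) * s + tau 0) with hu
  set v : ℝ → ℝ := fun s => dlt s * f s - dlt 0 with hv
  have hu' : ∀ s, HasDerivAt u (((m : ℝ) / 2) * v s - tau s * u s) s := by
    intro s
    have h2 : HasDerivAt u ((((m : ℝ) / 2) * dlt s - tau s ^ 2) * f s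
        + tau s * (((m : ℝ) * dlt 0 / 2) * s + tau 0) - ((m : ℝ) * dlt 0 / 2)) s := by
      have hlin : HasDerivAt (fun x : ℝ => ((m : ℝ) * dlt 0 / 2) * x + tau 0)
          ((m : ℝ) * dlt 0 / 2) s := by
        simpa using ((hasDerivAt_id s).const_mul ((m : ℝ) * dlt 0 / 2)).add_const (tau 0)
      exact ((htau' s).mul (hfd s)).sub hlin
    convert h2 using 1
    simp only [hu, hv]
    ring
  have hv' : ∀ s, HasDerivAt v (-(dlt s * u s)) s := by
    intro s
    have h2 : HasDerivAt v (-(tau s * dlt s) * f s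
        + dlt s * (((m : ℝ) * dlt 0 / 2) * s + tau 0)) s :=
      ((hdlt' s).mul (hfd s)).sub_const _
    convert h2 using 1
    simp only [hu]
    ring
  -- bound coefficients on a compact interval
  set b : ℝ := |t| + 1 with hb
  have hb0 : (1 : ℝ) ≤ b := by rw [hb]; linarith [abs_nonneg t]
  have hcont : Continuous fun s => (tau s, dlt s) :=
    (continuous_iff_continuousAt.mpr fun s => (htau' s).continuousAt).prodMk
      (continuous_iff_continuousAt.mpr fun s => (hdlt' s).continuousAt)
  obtain ⟨C, hC⟩ := (isCompact_Icc (a := -b) (b := b)).exists_bound_of_continuousOn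
    hcont.continuousOn
  have hC0 : 0 ≤ C := le_trans (norm_nonneg _) (hC 0 ⟨by linarith, by linarith⟩)
  have htb : ∀ s ∈ Set.Icc (-b) b, |tau s| ≤ C := fun s hs =>
    le_trans (norm_fst_le ((tau s, dlt s))) (hC s hs)
  have hdb : ∀ s ∈ Set.Icc (-b) b, |dlt s| ≤ C := fun s hs =>
    le_trans (norm_snd_le ((tau s, dlt s))) (hC s hs)
  set K : NNReal := Real.toNNReal ((m : ℝ) / 2 + C) with hK
  set vf : ℝ → ℝ × ℝ → ℝ × ℝ := fun s x =>
    (((m : ℝ) / 2) * x.2 - tau (max (-b) (min b s)) * x.1,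
      -(dlt (max (-b) (min b s)) * x.1)) with hvf
  have hlip : ∀ s, LipschitzWith K (vf s) := by
    intro s
    apply LipschitzWith.of_dist_le_mul
    intro x y
    have hp : max (-b) (min b s) ∈ Set.Icc (-b) b :=
      ⟨le_max_left _ _, max_le (by linarith) (min_le_left _ _)⟩
    have h1 := htb _ hp
    have h2 := hdb _ hp
    set p := max (-b) (min b s)
    rw [Prod.dist_eq, Prod.dist_eq]
    simp only [Real.dist_eq, hvf]
    have hKc : (K : ℝ) = (m : ℝ) / 2 + C := Real.coe_toNNReal _ (by positivity)
    have hd1 : |x.1 - y.1| ≤ max |x.1 - y.1| |x.2 - y.2| := le_max_left _ _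
    have hd2 : |x.2 - y.2| ≤ max |x.1 - y.1| |x.2 - y.2| := le_max_right _ _
    apply max_le
    · have : ((m : ℝ) / 2) * x.2 - tau p * x.1 - (((m : ℝ) / 2) * y.2 - tau p * y.1)
          = ((m : ℝ) / 2) * (x.2 - y.2) + (-(tau p)) * (x.1 - y.1) := by ring
      rw [this]
      refine (abs_add_le _ _).trans ?_
      rw [abs_mul, abs_mul, abs_neg]
      rw [hKc]
      have hm : |(m : ℝ) / 2| = (m : ℝ) / 2 := abs_of_nonneg (by positivity)
      rw [hm]
      have q1 : ((m : ℝ) / 2) * |x.2 - y.2| ≤ ((m : ℝ) / 2) * (max |x.1 - y.1| |x.2 - y.2|) :=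
        mul_le_mul_of_nonneg_left hd2 (by positivity)
      have q2 : |tau p| * |x.1 - y.1| ≤ C * (max |x.1 - y.1| |x.2 - y.2|) :=
        mul_le_mul h1 hd1 (abs_nonneg _) hC0
      linarith
    · have : -(dlt p * x.1) - -(dlt p * y.1) = (-(dlt p)) * (x.1 - y.1) := by ring
      rw [this, abs_mul, abs_neg, hKc]
      have q2 : |dlt p| * |x.1 - y.1| ≤ C * (max |x.1 - y.1| |x.2 - y.2|) :=
        mul_le_mul h2 hd1 (abs_nonneg _) hC0
      have q3 : (0 : ℝ) ≤ ((m : ℝ) / 2) * (max |x.1 - y.1| |x.2 - y.2|) := by positivity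
      linarith
  -- the two solutions
  set g : ℝ → ℝ × ℝ := fun s => (u s, v s) with hg
  have hgd : ∀ s ∈ Set.Ioo (-b) b, HasDerivAt g (vf s (g s)) s := by
    intro s hs
    have hps : max (-b) (min b s) = s := by
      rw [min_eq_right hs.2.le, max_eq_right hs.1.le]
    have : vf s (g s) = (((m : ℝ) / 2) * v s - tau s * u s, -(dlt s * u s)) := by
      simp only [hvf, hg, hps]
    rw [this]
    exact (hu' s).prodMk (hv' s)
  have hzd : ∀ s ∈ Set.Ioo (-b) b,
      HasDerivAt (fun _ : ℝ => ((0 : ℝ), (0 : ℝ))) (vf s (0, 0)) s := by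
    intro s hs
    have : vf s ((0 : ℝ), (0 : ℝ)) = (0, 0) := by simp [hvf]
    rw [this]
    exact hasDerivAt_const s _
  have hf0 : f 0 = 1 := by simp [hf]
  have heq0 : g 0 = (0, 0) := by
    simp [hg, hu, hv, hf0]
  have := ODE_solution_unique_of_mem_Icc (v := vf) (s := fun _ => Set.univ)
    (fun s _ => (hlip s).lipschitzOnWith)
    (show (0 : ℝ) ∈ Set.Ioo (-b) b from ⟨by linarith, by linarith⟩)
    (Continuous.continuousOn (by
      exact (continuous_iff_continuousAt.mpr fun s => ((hu' s).prodMk (hv' s)).continuousAt)))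
    hgd (fun _ _ => trivial)
    continuousOn_const hzd (fun _ _ => trivial) heq0
  have hteq : g t = (0, 0) := by
    have ht : t ∈ Set.Icc (-b) b :=
      ⟨by rw [hb]; linarith [neg_abs_le t], by rw [hb]; linarith [le_abs_self t]⟩
    exact this ht
  have h1 : u t = 0 := congrArg Prod.fst hteq
  have h2 : v t = 0 := congrArg Prod.snd hteq
  constructor
  · have : tau t * f t - (((m : ℝ) * dlt 0 / 2) * t + tau 0) = 0 := h1
    linarith
  · have : dlt t * f t - dlt 0 = 0 := h2
    linarith

/-- along a solution of the reduced geodesic equation,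
`τ = tr L` and `δ = tr(Lᵀ L)` satisfy `τ' + τ² - (m/2)δ = 0`, `δ' + τδ = 0`,
and hence `τ = f'/f`, `δ = δ₀/f` on the interval where `f > 0`, with
`f t = (m δ₀ / 4) t² + τ₀ t + 1`. -/
theorem stmt_9 {n m : ℕ} (hmn : m ≤ n)
    (a : ℝ → Matrix (Fin n) (Fin m) ℝ) (L : ℝ → Matrix (Fin n) (Fin n) ℝ)
    (hrank : ∀ t, (a t).rank = m)
    (hda : ∀ t, HasDerivAt a (L t * a t) t)
    (hLa : ∀ t, L t * (a t * aplus (a t)) = L t)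
    (hode : ∀ t, HasDerivAt L
      (-((Matrix.trace (L t)) • L t + ((L t)ᵀ * L t - L t * (L t)ᵀ)
          - ((1 / 2) * Matrix.trace ((L t)ᵀ * L t)) • (a t * aplus (a t)))) t)
    (tau dlt f : ℝ → ℝ)
    (htau : ∀ t, tau t = Matrix.trace (L t))
    (hdlt : ∀ t, dlt t = Matrix.trace ((L t)ᵀ * L t))
    (hf : ∀ t, f t = ((m : ℝ) * dlt 0 / 4) * t ^ 2 + tau 0 * t + 1) :
    (∀ t, HasDerivAt tau (((m : ℝ) / 2) * dlt t - tau t ^ 2) t) ∧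
    (∀ t, HasDerivAt dlt (-(tau t * dlt t)) t) ∧
    (∀ t, (∀ s ∈ Set.uIcc (0 : ℝ) t, 0 < f s) →
      tau t * f t = ((m : ℝ) * dlt 0 / 2) * t + tau 0 ∧ dlt t * f t = dlt 0) := by
  have key : ∀ s, HasDerivAt tau (((m : ℝ) / 2) * dlt s - tau s ^ 2) s ∧
      HasDerivAt dlt (-(tau s * dlt s)) s := by
    intro s
    have hD := hode s
    have hAP := hLa s
    set A := L s with hA
    set P := a s * aplus (a s) with hPdef
    set D := -((Matrix.trace A) • A + (Aᵀ * A - A * Aᵀ)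
      - ((1 / 2) * Matrix.trace (Aᵀ * A)) • P) with hDdef
    -- facts about P
    have hU : IsUnit ((a s)ᵀ * a s).det := by
      rw [← Matrix.isUnit_iff_isUnit_det, ← Matrix.mulVec_surjective_iff_isUnit]
      have h3 : LinearMap.range ((a s)ᵀ * a s).mulVecLin = ⊤ := by
        apply Submodule.eq_top_of_finrank_eq
        rw [Module.finrank_pi, Fintype.card_fin]
        have h1 : ((a s)ᵀ * a s).rank = m := by
          rw [Matrix.rank_transpose_mul_self]; exact hrank s
        exact h1
      have := LinearMap.range_eq_top.mp h3
      rwa [Matrix.coe_mulVecLin] at this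
    have htrP : Matrix.trace P = (m : ℝ) := by
      rw [hPdef, Matrix.trace_mul_comm, aplus, Matrix.mul_assoc,
        Matrix.nonsing_inv_mul _ hU, Matrix.trace_one, Fintype.card_fin]
    have hPs : Pᵀ = P := by
      rw [hPdef, aplus, ← Matrix.mul_assoc, Matrix.transpose_mul, Matrix.transpose_mul,
        Matrix.transpose_nonsing_inv, Matrix.transpose_mul, Matrix.transpose_transpose,
        Matrix.mul_assoc]
    -- trace identities
    have hsym : ∀ X Y : Matrix (Fin n) (Fin n) ℝ,
        Matrix.trace (Xᵀ * Y) = Matrix.trace (Yᵀ * X) := by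
      intro X Y
      rw [← Matrix.trace_transpose (Xᵀ * Y), Matrix.transpose_mul, Matrix.transpose_transpose]
    have hAAT : Matrix.trace (A * Aᵀ) = Matrix.trace (Aᵀ * A) := Matrix.trace_mul_comm _ _
    have h3 : Matrix.trace (Aᵀ * (Aᵀ * A)) = Matrix.trace (Aᵀ * (A * Aᵀ)) := by
      rw [Matrix.trace_mul_comm, Matrix.mul_assoc]
    have htrAP : Matrix.trace (Aᵀ * P) = Matrix.trace A := by
      rw [← hPs, ← Matrix.transpose_mul, Matrix.trace_transpose, Matrix.trace_mul_comm, hAP]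
    have e1 : Matrix.trace D
        = ((m : ℝ) / 2) * Matrix.trace (Aᵀ * A) - Matrix.trace A ^ 2 := by
      rw [hDdef]
      simp only [Matrix.trace_neg, Matrix.trace_add, Matrix.trace_sub, Matrix.trace_smul,
        smul_eq_mul, hAAT, htrP]
      ring
    have e2 : Matrix.trace (Dᵀ * A + Aᵀ * D)
        = -(Matrix.trace A * Matrix.trace (Aᵀ * A)) := by
      have hexp : Aᵀ * D = -((Matrix.trace A) • (Aᵀ * A) + (Aᵀ * (Aᵀ * A) - Aᵀ * (A * Aᵀ))
          - ((1 / 2) * Matrix.trace (Aᵀ * A)) • (Aᵀ * P)) := by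
        rw [hDdef]
        simp [Matrix.mul_add, Matrix.mul_sub, Matrix.mul_smul]
      rw [Matrix.trace_add, hsym, hexp]
      simp only [Matrix.trace_neg, Matrix.trace_add, Matrix.trace_sub, Matrix.trace_smul,
        smul_eq_mul, h3, htrAP]
      ring
    -- derivatives of the trace functions
    have hT : HasDerivAt (fun r => (L r)ᵀ) Dᵀ s := by
      have := (LinearMap.toContinuousLinearMap
        ((Matrix.transposeLinearEquiv (Fin n) (Fin n) ℝ ℝ).toLinearMap)).hasFDerivAt.comp_hasDerivAt
        s hD
      exact this
    have hM : HasDerivAt (fun r => (L r)ᵀ * L r) (Dᵀ * A + Aᵀ * D) s := hT.mul hD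
    have hd1 : HasDerivAt (fun r => Matrix.trace (L r)) (Matrix.trace D) s := by
      have := (LinearMap.toContinuousLinearMap
        (Matrix.traceLinearMap (Fin n) ℝ ℝ)).hasFDerivAt.comp_hasDerivAt s hD
      exact this
    have hd2 : HasDerivAt (fun r => Matrix.trace ((L r)ᵀ * L r))
        (Matrix.trace (Dᵀ * A + Aᵀ * D)) s := by
      have := (LinearMap.toContinuousLinearMap
        (Matrix.traceLinearMap (Fin n) ℝ ℝ)).hasFDerivAt.comp_hasDerivAt s hM
      exact this
    constructor
    · rw [funext htau, funext hdlt]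
      simpa only [← hA, ← e1] using hd1
    · rw [funext htau, funext hdlt]
      simpa only [← hA, ← e2] using hd2
  refine ⟨fun t => (key t).1, fun t => (key t).2, fun t _ => ?_⟩
  exact ode_part m tau dlt f (fun s => (key s).1) (fun s => (key s).2) hf t
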